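/- Consider the triple {0} ⊆ so(3) ⊆ so(4), with so(3) embedded as x ↦ diag(x,0). Then the fatness coindex of this triple equals 1: for every nonzero y ∈ so(3) the centralizer of y in 𝔭 = so(3)^⊥ ⊂ so(4) is 1-dimensional, and for every nonzero x ∈ 𝔭 the centralizer of x in so(3) is 1-dimensional. -/

import Mathlib

open scoped Matrix

attribute [local instance] LieRing.ofAssociativeRing

/-- The centralizer of `x` in a subspace `a` of a Lie algebra:
`Z_a(x) = {y ∈ a : ⁅x, y⁆ = 0}`. -/
def centralizerIn {L : Type*} [LieRing L] [LieAlgebra ℝ L]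
    (a : Submodule ℝ L) (x : L) : Submodule ℝ L where
  carrier := {y | y ∈ a ∧ ⁅x, y⁆ = 0}
  add_mem' := by
    rintro y z ⟨hy, hy'⟩ ⟨hz, hz'⟩
    exact ⟨a.add_mem hy hz, by rw [lie_add, hy', hz', add_zero]⟩
  zero_mem' := ⟨a.zero_mem, lie_zero x⟩
  smul_mem' := by
    rintro c y ⟨hy, hy'⟩
    exact ⟨a.smul_mem c hy, by rw [lie_smul, hy', smul_zero]⟩

/-- For `z ∈ ℝᵏ`, the skew-symmetric matrix `M(z) ∈ so(k+1)` whose last column is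
`(z₁, …, z_k, 0)ᵀ`, whose last row is `(−z₁, …, −z_k, 0)`, and with zeros elsewhere. -/
def Mvec {k : ℕ} (z : Fin k → ℝ) : Matrix (Fin (k + 1)) (Fin (k + 1)) ℝ :=
  Matrix.of fun i j =>
    if hi : (i : ℕ) < k then
      if hj : (j : ℕ) < k then 0 else z ⟨i, hi⟩
    else
      if hj : (j : ℕ) < k then -z ⟨j, hj⟩ else 0

/-- `Mvec` as a linear map. -/
def MvecL (k : ℕ) : (Fin k → ℝ) →ₗ[ℝ] Matrix (Fin (k + 1)) (Fin (k + 1)) ℝ where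
  toFun := Mvec
  map_add' z w := by
    funext i j
    simp only [Mvec, Matrix.of_apply, Matrix.add_apply, Pi.add_apply]
    split_ifs <;> simp <;> ring
  map_smul' c z := by
    funext i j
    simp only [Mvec, Matrix.of_apply, Matrix.smul_apply, Pi.smul_apply, RingHom.id_apply,
      smul_eq_mul]
    split_ifs <;> simp [mul_comm]

/-- The block-diagonal embedding `A ↦ diag(A, 0)` of `k × k` matrices into
`(k+1) × (k+1)` matrices. -/
def embedM {k : ℕ} (A : Matrix (Fin k) (Fin k) ℝ) : Matrix (Fin (k + 1)) (Fin (k + 1)) ℝ :=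
  Matrix.of fun i j =>
    if hi : (i : ℕ) < k then
      if hj : (j : ℕ) < k then A ⟨i, hi⟩ ⟨j, hj⟩ else 0
    else 0

/-- `embedM` as a linear map. -/
def embedL (k : ℕ) : Matrix (Fin k) (Fin k) ℝ →ₗ[ℝ] Matrix (Fin (k + 1)) (Fin (k + 1)) ℝ where
  toFun := embedM
  map_add' A C := by
    funext i j
    simp only [embedM, Matrix.of_apply, Matrix.add_apply]
    split_ifs <;> simp
  map_smul' c A := by
    funext i j
    simp only [embedM, Matrix.of_apply, Matrix.smul_apply, RingHom.id_apply, smul_eq_mul]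
    split_ifs <;> simp

/-- The space of skew-symmetric real `k × k` matrices, i.e. `so(k)`. -/
def skewSubmodule (k : ℕ) : Submodule ℝ (Matrix (Fin k) (Fin k) ℝ) where
  carrier := {A | Aᵀ = -A}
  add_mem' := by
    intro A C hA hC
    simp only [Set.mem_setOf_eq] at *
    rw [Matrix.transpose_add, hA, hC, neg_add]
  zero_mem' := by simp
  smul_mem' := by
    intro c A hA
    simp only [Set.mem_setOf_eq] at *
    rw [Matrix.transpose_smul, hA, smul_neg]


lemma ker_cross {w : Fin 3 → ℝ} (hw : w ≠ 0) :
    LinearMap.ker (crossProduct w) = (Submodule.span ℝ {w}) := by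
  ext z
  simp only [LinearMap.mem_ker, Submodule.mem_span_singleton]
  constructor
  · intro h
    have hni : ¬ LinearIndependent ℝ ![w, z] := by
      rw [← crossProduct_ne_zero_iff_linearIndependent]
      simpa using h
    rw [linearIndependent_fin2] at hni
    push_neg at hni
    rcases eq_or_ne z 0 with rfl | hz
    · exact ⟨0, by simp⟩
    · obtain ⟨a, ha⟩ := hni (by simpa using hz)
      simp only [Matrix.cons_val_one, Matrix.head_cons, Matrix.cons_val_zero] at ha
      have ha0 : a ≠ 0 := by rintro rfl; simp at ha; exact hw ha.symm
      exact ⟨a⁻¹, by rw [← ha, smul_smul, inv_mul_cancel₀ ha0, one_smul]⟩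
  · rintro ⟨c, rfl⟩
    rw [map_smul]
    simp

def skewOf (w : Fin 3 → ℝ) : Matrix (Fin 3) (Fin 3) ℝ :=
  !![0, -w 2, w 1; w 2, 0, -w 0; -w 1, w 0, 0]

def skewL : (Fin 3 → ℝ) →ₗ[ℝ] Matrix (Fin 3) (Fin 3) ℝ where
  toFun := skewOf
  map_add' v w := by
    funext i j
    fin_cases i <;> fin_cases j <;> simp [skewOf] <;> ring
  map_smul' c w := by
    funext i j
    fin_cases i <;> fin_cases j <;> simp [skewOf]

lemma skewL_apply (w : Fin 3 → ℝ) : skewL w = skewOf w := rfl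

lemma skewOf_mulVec (w z : Fin 3 → ℝ) : (skewOf w).mulVec z = w ⨯₃ z := by
  funext i
  fin_cases i <;>
    simp [skewOf, Matrix.mulVec, dotProduct, Fin.sum_univ_three, cross_apply] <;> ring

lemma skewL_injective : Function.Injective skewL := by
  intro v w h
  funext i
  have h01 := congrFun (congrFun h 0) 1
  have h02 := congrFun (congrFun h 0) 2
  have h21 := congrFun (congrFun h 2) 1
  simp only [skewL_apply, skewOf] at h01 h02 h21
  fin_cases i <;> simp_all

lemma range_skewL : LinearMap.range skewL = skewSubmodule 3 := by
  apply le_antisymm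
  · rintro _ ⟨w, rfl⟩
    show (skewL w)ᵀ = -(skewL w)
    funext i j
    fin_cases i <;> fin_cases j <;> simp [skewL_apply, skewOf]
  · rintro A (hA : Aᵀ = -A)
    have h : ∀ i j, A j i = -A i j := by
      intro i j
      have := congrFun (congrFun hA i) j
      simpa [Matrix.transpose_apply] using this
    refine ⟨![A 2 1, A 0 2, A 1 0], ?_⟩
    show skewOf _ = A
    funext i j
    have h00 := h 0 0; have h11 := h 1 1; have h22 := h 2 2
    have h01 := h 0 1; have h02 := h 0 2; have h12 := h 1 2
    fin_cases i <;> fin_cases j <;> simp [skewOf] <;> linarith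

lemma Mvec_eq_zero {k : ℕ} {z : Fin k → ℝ} (h : Mvec z = 0) : z = 0 := by
  funext i
  have := congrFun (congrFun h ⟨i, by omega⟩) ⟨k, by omega⟩
  simpa [Mvec, i.isLt] using this

lemma MvecL_apply {k : ℕ} (z : Fin k → ℝ) : MvecL k z = Mvec z := rfl

lemma MvecL_injective {k : ℕ} : Function.Injective (MvecL k) := by
  intro v w h
  have h2 : Mvec (v - w) = 0 := by
    rw [show Mvec (v - w) = MvecL k (v - w) from rfl, map_sub, h, sub_self]
  have := Mvec_eq_zero h2
  rwa [sub_eq_zero] at this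

lemma embedL_apply {k : ℕ} (A : Matrix (Fin k) (Fin k) ℝ) : embedL k A = embedM A := rfl

lemma embedL_injective {k : ℕ} : Function.Injective (embedL k) := by
  intro A B h
  funext i j
  have := congrFun (congrFun h ⟨i, by omega⟩) ⟨j, by omega⟩
  rw [embedL_apply, embedL_apply] at this
  simp only [embedM, Matrix.of_apply] at this
  rw [dif_pos i.isLt, dif_pos j.isLt] at this
  simpa using this

lemma Mvec3_eq (z : Fin 3 → ℝ) :
    Mvec z = !![0,0,0,z 0; 0,0,0,z 1; 0,0,0,z 2; -z 0,-z 1,-z 2,0] := by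
  funext i j
  fin_cases i <;> fin_cases j <;> rfl

lemma embedM3_eq (A : Matrix (Fin 3) (Fin 3) ℝ) :
    embedM A = !![A 0 0, A 0 1, A 0 2, 0; A 1 0, A 1 1, A 1 2, 0;
                 A 2 0, A 2 1, A 2 2, 0; 0, 0, 0, 0] := by
  funext i j
  fin_cases i <;> fin_cases j <;> rfl

set_option maxHeartbeats 1000000 in
lemma lie_embed_Mvec (w z : Fin 3 → ℝ) :
    ⁅embedM (skewOf w), Mvec z⁆ = Mvec ((skewOf w).mulVec z) := by
  rw [Ring.lie_def, skewOf_mulVec, Mvec3_eq, Mvec3_eq, embedM3_eq]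
  funext i j
  fin_cases i <;> fin_cases j <;>
    simp [Matrix.mul_apply, Fin.sum_univ_four, cross_apply, skewOf,
      Matrix.vecHead, Matrix.vecTail] <;> ring
lemma mem_centralizerIn {L : Type*} [LieRing L] [LieAlgebra ℝ L]
    {a : Submodule ℝ L} {x y : L} :
    y ∈ centralizerIn a x ↔ y ∈ a ∧ ⁅x, y⁆ = 0 := Iff.rfl

/-- Consider the triple `{0} ⊆ so(3) ⊆ so(4)`, with `so(3)` embedded
as `x ↦ diag(x, 0)`.  The fatness coindex of this triple equals `1`: for every
nonzero `y ∈ 𝔪 = so(3)` the centralizer of `y` in `𝔭 = so(3)ᗮ = {M(z) : z ∈ ℝ³}` is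
`1`-dimensional, and for every nonzero `x ∈ 𝔭` the centralizer of `x` in `so(3)` is
`1`-dimensional. -/
theorem stmt4
    (p mm : Submodule ℝ (Matrix (Fin 4) (Fin 4) ℝ))
    (hp : p = LinearMap.range (MvecL 3))
    (hmm : mm = Submodule.map (embedL 3) (skewSubmodule 3)) :
    (∀ y ∈ mm, y ≠ 0 → Module.finrank ℝ (centralizerIn p y) = 1) ∧
    (∀ x ∈ p, x ≠ 0 → Module.finrank ℝ (centralizerIn mm x) = 1) := by
  subst hp hmm
  constructor
  · rintro y hy hy0
    obtain ⟨A, hA, rfl⟩ := hy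
    rw [← range_skewL] at hA
    obtain ⟨w, rfl⟩ := hA
    have hw : w ≠ 0 := by
      rintro rfl
      simp at hy0
    have hclaim : centralizerIn (LinearMap.range (MvecL 3)) (embedL 3 (skewL w)) =
        Submodule.map (MvecL 3) (Submodule.span ℝ {w}) := by
      ext u
      rw [mem_centralizerIn, Submodule.mem_map]
      constructor
      · rintro ⟨⟨z, rfl⟩, hcom⟩
        refine ⟨z, ?_, rfl⟩
        rw [embedL_apply, skewL_apply, MvecL_apply, lie_embed_Mvec] at hcom
        have h0 := Mvec_eq_zero hcom
        rw [skewOf_mulVec] at h0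
        have : z ∈ LinearMap.ker (crossProduct w) := h0
        rwa [ker_cross hw] at this
      · rintro ⟨z, hz, rfl⟩
        refine ⟨⟨z, rfl⟩, ?_⟩
        rw [embedL_apply, skewL_apply, MvecL_apply, lie_embed_Mvec, skewOf_mulVec]
        have : z ∈ LinearMap.ker (crossProduct w) := by rwa [ker_cross hw]
        rw [LinearMap.mem_ker] at this
        rw [this]
        exact map_zero (MvecL 3)
    rw [hclaim,
      ← LinearEquiv.finrank_eq
        (Submodule.equivMapOfInjective (MvecL 3) MvecL_injective (Submodule.span ℝ {w})),
      finrank_span_singleton hw]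
  · rintro x hx hx0
    obtain ⟨z, rfl⟩ := hx
    have hz : z ≠ 0 := by
      rintro rfl
      simp at hx0
    have hclaim : centralizerIn (Submodule.map (embedL 3) (skewSubmodule 3)) (MvecL 3 z) =
        Submodule.map ((embedL 3) ∘ₗ skewL) (Submodule.span ℝ {z}) := by
      ext u
      rw [mem_centralizerIn, Submodule.mem_map]
      constructor
      · rintro ⟨hu, hcom⟩
        obtain ⟨A, hA, rfl⟩ := hu
        rw [← range_skewL] at hA
        obtain ⟨w, rfl⟩ := hA
        refine ⟨w, ?_, rfl⟩
        have hswap : ⁅embedM (skewOf w), Mvec z⁆ = -⁅Mvec z, embedM (skewOf w)⁆ := by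
          rw [Ring.lie_def, Ring.lie_def, neg_sub]
        rw [embedL_apply, skewL_apply, MvecL_apply] at hcom
        rw [hcom, neg_zero] at hswap
        rw [lie_embed_Mvec] at hswap
        have h0 : w ⨯₃ z = 0 := by
          have := Mvec_eq_zero hswap
          rwa [skewOf_mulVec] at this
        have hzw : z ⨯₃ w = 0 := by rw [← cross_anticomm, h0, neg_zero]
        have : w ∈ LinearMap.ker (crossProduct z) := hzw
        rwa [ker_cross hz] at this
      · rintro ⟨w, hwmem, rfl⟩
        have hzw : z ⨯₃ w = 0 := by
          have : w ∈ LinearMap.ker (crossProduct z) := by rwa [ker_cross hz]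
          exact this
        have hwz : w ⨯₃ z = 0 := by rw [← cross_anticomm, hzw, neg_zero]
        constructor
        · exact ⟨skewL w, by rw [← range_skewL]; exact ⟨w, rfl⟩, rfl⟩
        · have hswap : ⁅MvecL 3 z, (embedL 3 ∘ₗ skewL) w⁆ =
              -⁅embedM (skewOf w), Mvec z⁆ := by
            rw [LinearMap.comp_apply, embedL_apply, skewL_apply, MvecL_apply,
              Ring.lie_def, Ring.lie_def, neg_sub]
          rw [hswap, lie_embed_Mvec, skewOf_mulVec, hwz]
          rw [show Mvec (0 : Fin 3 → ℝ) = 0 from map_zero (MvecL 3), neg_zero]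
    rw [hclaim,
      ← LinearEquiv.finrank_eq
        (Submodule.equivMapOfInjective ((embedL 3) ∘ₗ skewL)
          (by rw [LinearMap.coe_comp]; exact embedL_injective.comp skewL_injective)
          (Submodule.span ℝ {z})),
      finrank_span_singleton hz]
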